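/- Let (A, m) be a Noetherian local ring and I an m-primary m-full ideal, i.e., there exists x ∈ m with (mI : x) = I. Then for every ideal J with I ⊆ J, one has μ(J) ≤ μ(I). -/

import Mathlib

set_option linter.unusedSectionVars false


section Flen

open CompositionSeries

open Classical in
/-- Length of a module (well-defined for finite length modules). -/
noncomputable def flen (R M : Type*) [Ring R] [AddCommGroup M] [Module R M] : ℕ :=
  if h : ∃ s : CompositionSeries (Submodule R M), s.head = ⊥ ∧ s.last = ⊤ then
    h.choose.length else 0

variable {R M N : Type*} [Ring R] [AddCommGroup M] [Module R M] [AddCommGroup N] [Module R N]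

lemma flen_eq (s : CompositionSeries (Submodule R M)) (h1 : s.head = ⊥) (h2 : s.last = ⊤) :
    flen R M = s.length := by
  have h : ∃ s : CompositionSeries (Submodule R M), s.head = ⊥ ∧ s.last = ⊤ := ⟨s, h1, h2⟩
  rw [flen, dif_pos h]
  exact (CompositionSeries.jordan_holder _ _ (h.choose_spec.1.trans h1.symm)
    (h.choose_spec.2.trans h2.symm)).length_eq

lemma flen_zero_of_subsingleton (h : Subsingleton M) : flen R M = 0 :=
  flen_eq (RelSeries.singleton _ ⊥) rfl (Subsingleton.elim _ _)

lemma subsingleton_of_flen_zero [IsNoetherian R M] [IsArtinian R M] (h : flen R M = 0) :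
    Subsingleton M := by
  obtain ⟨s, h1, h2⟩ := exists_compositionSeries_of_isNoetherian_isArtinian R M
  have hl := (flen_eq s h1 h2).symm.trans h
  have : s.head = s.last := by
    unfold RelSeries.head RelSeries.last
    congr 1
    ext
    simp [hl]
  rw [h1, h2] at this
  exact (Submodule.subsingleton_iff R).mp (subsingleton_of_bot_eq_top this)

end Flen

section Covby

variable {R M N : Type*} [Ring R] [AddCommGroup M] [Module R M] [AddCommGroup N] [Module R N]

lemma covby_map_subtype {P : Submodule R M} {a b : Submodule R ↥P} (h : a ⋖ b) :
    a.map P.subtype ⋖ b.map P.subtype := by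
  have hinj := P.injective_subtype
  constructor
  · exact lt_of_le_of_ne (Submodule.map_mono h.le)
      (fun he => h.lt.ne (Submodule.map_injective_of_injective hinj he))
  · intro c hac hcb
    have hcN : c ≤ P := hcb.le.trans (Submodule.map_subtype_le P b)
    have hmapc : Submodule.map P.subtype (Submodule.comap P.subtype c) = c := by
      rw [Submodule.map_comap_subtype, inf_eq_right.mpr hcN]
    have h1 : a < Submodule.comap P.subtype c := by
      refine lt_of_le_of_ne ?_ ?_
      · rw [← Submodule.comap_map_eq_of_injective hinj a]
        exact Submodule.comap_mono hac.le
      · intro he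
        exact hac.ne (by rw [he, hmapc])
    have h2 : Submodule.comap P.subtype c < b := by
      refine lt_of_le_of_ne ?_ ?_
      · rw [← Submodule.comap_map_eq_of_injective hinj b]
        exact Submodule.comap_mono (hmapc ▸ hcb.le)
      · intro he
        exact hcb.ne (by rw [← hmapc, he])
    exact h.2 h1 h2

lemma covby_comap_mkQ {P : Submodule R M} {a b : Submodule R (M ⧸ P)} (h : a ⋖ b) :
    a.comap P.mkQ ⋖ b.comap P.mkQ := by
  have hsurj : Function.Surjective P.mkQ := P.mkQ_surjective
  constructor
  · exact lt_of_le_of_ne (Submodule.comap_mono h.le)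
      (fun he => h.lt.ne (Submodule.comap_injective_of_surjective hsurj he))
  · intro c hac hcb
    have hPc : P ≤ c := by
      refine le_trans ?_ hac.le
      exact le_trans (le_of_eq (Submodule.ker_mkQ P).symm) (Submodule.comap_mono bot_le)
    have hmapc : Submodule.comap P.mkQ (Submodule.map P.mkQ c) = c := by
      rw [Submodule.comap_map_mkQ, sup_eq_right.mpr hPc]
    have h1 : a < Submodule.map P.mkQ c := by
      refine lt_of_le_of_ne ?_ (fun he => hac.ne ?_)
      · rw [← Submodule.comap_le_comap_iff_of_surjective hsurj, hmapc]
        exact hac.le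
      · rw [he, hmapc]
    have h2 : Submodule.map P.mkQ c < b := by
      refine lt_of_le_of_ne ?_ (fun he => hcb.ne ?_)
      · rw [← Submodule.comap_le_comap_iff_of_surjective hsurj, hmapc]
        exact hcb.le
      · rw [← hmapc, he]
    exact h.2 h1 h2

end Covby

section FlenAdd

variable {R M N : Type*} [Ring R] [AddCommGroup M] [Module R M] [AddCommGroup N] [Module R N]

lemma flen_add [IsNoetherian R M] [IsArtinian R M] (P : Submodule R M) :
    flen R M = flen R ↥P + flen R (M ⧸ P) := by
  obtain ⟨s, hs1, hs2⟩ := exists_compositionSeries_of_isNoetherian_isArtinian R ↥P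
  obtain ⟨t, ht1, ht2⟩ := exists_compositionSeries_of_isNoetherian_isArtinian R (M ⧸ P)
  let f : SetRel.Hom {(x, y) : Submodule R ↥P × Submodule R ↥P | JordanHolderLattice.IsMaximal x y}
      {(x, y) : Submodule R M × Submodule R M | JordanHolderLattice.IsMaximal x y} :=
    ⟨Submodule.map P.subtype, fun h => covby_map_subtype h⟩
  let g : SetRel.Hom {(x, y) : Submodule R (M ⧸ P) × Submodule R (M ⧸ P) | JordanHolderLattice.IsMaximal x y}
      {(x, y) : Submodule R M × Submodule R M | JordanHolderLattice.IsMaximal x y} :=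
    ⟨Submodule.comap P.mkQ, fun h => covby_comap_mkQ h⟩
  have hconn : (s.map f).last = (t.map g).head := by
    rw [RelSeries.last_map, RelSeries.head_map, hs2, ht1]
    show Submodule.map P.subtype ⊤ = Submodule.comap P.mkQ ⊥
    rw [Submodule.map_top, Submodule.range_subtype]
    exact (Submodule.ker_mkQ P).symm
  have hflen := flen_eq ((s.map f).smash (t.map g) hconn) ?_ ?_
  · rw [hflen, flen_eq s hs1 hs2, flen_eq t ht1 ht2]
    rfl
  · rw [RelSeries.head_smash, RelSeries.head_map, hs1]
    show Submodule.map P.subtype ⊥ = ⊥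
    exact Submodule.map_bot _
  · rw [RelSeries.last_smash, RelSeries.last_map, ht2]
    show Submodule.comap P.mkQ ⊤ = ⊤
    exact Submodule.comap_top _

lemma flen_congr (e : M ≃ₗ[R] N) [IsNoetherian R M] [IsArtinian R M] :
    flen R M = flen R N := by
  obtain ⟨s, hs1, hs2⟩ := exists_compositionSeries_of_isNoetherian_isArtinian R M
  let o : Submodule R M ≃o Submodule R N := Submodule.orderIsoMapComap e
  let f : SetRel.Hom {(x, y) : Submodule R M × Submodule R M | JordanHolderLattice.IsMaximal x y}
      {(x, y) : Submodule R N × Submodule R N | JordanHolderLattice.IsMaximal x y} :=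
    ⟨o, fun h => (apply_covBy_apply_iff o).mpr h⟩
  have h1 : (s.map f).head = ⊥ := by
    rw [RelSeries.head_map, hs1]
    exact (OrderIso.map_bot o :)
  have h2 : (s.map f).last = ⊤ := by
    rw [RelSeries.last_map, hs2]
    exact (OrderIso.map_top o :)
  rw [flen_eq s hs1 hs2, flen_eq (s.map f) h1 h2]
  rfl

lemma flen_le_of_injective (f : M →ₗ[R] N) (hf : Function.Injective f)
    [IsNoetherian R N] [IsArtinian R N] : flen R M ≤ flen R N := by
  haveI : IsNoetherian R M := isNoetherian_of_injective f hf
  haveI : IsArtinian R M := isArtinian_of_injective f hf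
  rw [flen_congr (LinearEquiv.ofInjective f hf), flen_add (LinearMap.range f)]
  exact Nat.le_add_right _ _

lemma flen_simple [IsSimpleModule R M] : flen R M = 1 := by
  have hcov : (⊥ : Submodule R M) ⋖ ⊤ := bot_covBy_top
  exact flen_eq ((RelSeries.singleton _ ⊥).snoc ⊤ hcov) rfl (RelSeries.last_snoc _ _ _)

lemma flen_simple_of_covby_top {P : Submodule R M} (h : P ⋖ ⊤) : flen R (M ⧸ P) = 1 := by
  haveI : IsSimpleModule R (M ⧸ P) := isSimpleModule_iff_isCoatom.mpr (covBy_top_iff.mp h)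
  exact flen_simple

end FlenAdd

section SpanFlen

universe u
variable {R : Type*} [Ring R]

lemma exists_span_card_flen :
    ∀ (n : ℕ) (M : Type u) [AddCommGroup M] [Module R M] [IsNoetherian R M] [IsArtinian R M],
      flen R M = n → ∃ s : Finset M, s.card ≤ n ∧ Submodule.span R (s : Set M) = ⊤ := by
  intro n
  induction n with
  | zero =>
    intro M _ _ _ _ hM
    haveI := subsingleton_of_flen_zero hM
    refine ⟨∅, by simp, ?_⟩
    rw [Finset.coe_empty, Submodule.span_empty]
    exact Subsingleton.elim _ _
  | succ n ih =>
    intro M _ _ _ _ hM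
    obtain ⟨s, hs1, hs2⟩ := exists_compositionSeries_of_isNoetherian_isArtinian R M
    have hlen : s.length = n + 1 := (flen_eq s hs1 hs2).symm.trans hM
    have hpos : 0 < s.length := by omega
    have hcov : s.eraseLast.last ⋖ ⊤ := by
      have := CompositionSeries.isMaximal_eraseLast_last hpos
      rwa [hs2] at this
    set P := s.eraseLast.last with hP
    have hflenq : flen R (M ⧸ P) = 1 := flen_simple_of_covby_top hcov
    have hadd := flen_add (R := R) (M := M) P
    have hflenP : flen R ↥P = n := by omega
    obtain ⟨t, ht1, ht2⟩ := ih ↥P hflenP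
    obtain ⟨v, -, hv⟩ := SetLike.exists_of_lt hcov.lt
    have hsup : P ⊔ Submodule.span R {v} = ⊤ := by
      by_contra hne
      refine hcov.2 ?_ (lt_of_le_of_ne le_top hne)
      exact SemilatticeSup.le_sup_left _ _ |>.lt_of_ne
        (fun he => hv (he ▸ Submodule.mem_sup_right (Submodule.mem_span_singleton_self v)))
    classical
    refine ⟨insert v (t.image (⇑P.subtype)), ?_, ?_⟩
    · calc (insert v (t.image (⇑P.subtype))).card
          ≤ (t.image (⇑P.subtype)).card + 1 := Finset.card_insert_le _ _
        _ ≤ t.card + 1 := by gcongr; exact Finset.card_image_le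
        _ ≤ n + 1 := by omega
    · rw [Finset.coe_insert, Submodule.span_insert, Finset.coe_image,
        ← Submodule.map_span P.subtype]
      rw [ht2, Submodule.map_top, Submodule.range_subtype, sup_comm]
      exact hsup

end SpanFlen

section LocalFlen

open IsLocalRing

universe u
variable {A : Type*} [CommRing A] [IsLocalRing A]

lemma flen_le_one_of_cyclic {M : Type u} [AddCommGroup M] [Module A M]
    [IsNoetherian A M] [IsArtinian A M]
    (htor : ∀ r ∈ maximalIdeal A, ∀ x : M, r • x = (0 : M))
    (v : M) (hv : Submodule.span A {v} = ⊤) : flen A M ≤ 1 := by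
  set f := LinearMap.toSpanSingleton A M v with hf
  have hrange : LinearMap.range f = ⊤ := by
    rw [← LinearMap.span_singleton_eq_range, hv]
  have hsurj : Function.Surjective f := LinearMap.range_eq_top.mp hrange
  have e := f.quotKerEquivOfSurjective hsurj
  have hker : maximalIdeal A ≤ LinearMap.ker f := by
    intro r hr
    exact htor r hr v
  rcases eq_or_ne (LinearMap.ker f) ⊤ with hk | hk
  · haveI : Subsingleton (A ⧸ LinearMap.ker f) :=
      Submodule.Quotient.subsingleton_iff.mpr hk
    haveI : Subsingleton M := e.symm.toEquiv.subsingleton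
    rw [flen_zero_of_subsingleton ‹_›]
    omega
  · have hkm : LinearMap.ker f = maximalIdeal A :=
      ((maximalIdeal.isMaximal A).eq_of_le hk hker).symm
    haveI : IsSimpleModule A (A ⧸ LinearMap.ker f) := by
      rw [hkm]
      exact isSimpleModule_iff_isCoatom.mpr (Ideal.isMaximal_def.mp (maximalIdeal.isMaximal A))
    haveI : IsNoetherian A (A ⧸ LinearMap.ker f) := inferInstance
    haveI : IsArtinian A (A ⧸ LinearMap.ker f) := inferInstance
    rw [← flen_congr e, flen_simple]

lemma flen_le_card_of_span :
    ∀ (n : ℕ) (M : Type u) [AddCommGroup M] [Module A M] [IsNoetherian A M] [IsArtinian A M],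
      (∀ r ∈ maximalIdeal A, ∀ x : M, r • x = (0 : M)) →
      ∀ s : Finset M, s.card ≤ n → Submodule.span A (s : Set M) = ⊤ → flen A M ≤ n := by
  intro n
  induction n with
  | zero =>
    intro M _ _ _ _ htor s hcard hspan
    have : s = ∅ := Finset.card_eq_zero.mp (Nat.le_zero.mp hcard)
    rw [this, Finset.coe_empty, Submodule.span_empty] at hspan
    haveI : Subsingleton M := (Submodule.subsingleton_iff A).mp
      (subsingleton_of_bot_eq_top hspan)
    rw [flen_zero_of_subsingleton ‹_›]
  | succ n ih =>
    intro M _ _ _ _ htor s hcard hspan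
    rcases Finset.eq_empty_or_nonempty s with rfl | ⟨a, ha⟩
    · rw [Finset.coe_empty, Submodule.span_empty] at hspan
      haveI : Subsingleton M := (Submodule.subsingleton_iff A).mp
        (subsingleton_of_bot_eq_top hspan)
      rw [flen_zero_of_subsingleton ‹_›]
      omega
    classical
    set P : Submodule A M := Submodule.span A {a} with hP
    have hflenP : flen A ↥P ≤ 1 := by
      refine flen_le_one_of_cyclic (M := ↥P) ?_ ⟨a, Submodule.mem_span_singleton_self a⟩ ?_
      · intro r hr x
        ext
        simpa using htor r hr (x : M)
      · apply Submodule.map_injective_of_injective P.injective_subtype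
        rw [Submodule.map_span, Submodule.map_top, Submodule.range_subtype]
        simp [hP]
    have hflenQ : flen A (M ⧸ P) ≤ n := by
      refine ih (M ⧸ P) ?_ ((s.erase a).image (⇑P.mkQ)) ?_ ?_
      · intro r hr x
        obtain ⟨y, rfl⟩ := P.mkQ_surjective x
        rw [← LinearMap.map_smul, htor r hr y, LinearMap.map_zero]
      · exact le_trans Finset.card_image_le (by
          have := Finset.card_erase_of_mem ha
          omega)
      · rw [Finset.coe_image, ← Submodule.map_span]
        have h1 : Submodule.span A (s : Set M) ≤ Submodule.span A ((s.erase a : Set M)) ⊔ P := by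
          rw [hP, sup_comm, ← Submodule.span_insert]
          apply Submodule.span_mono
          intro x hx
          rw [← Finset.insert_erase ha] at hx
          simpa using hx
        have h2 : Submodule.map P.mkQ (Submodule.span A ((s.erase a : Set M)) ⊔ P) = ⊤ := by
          refine top_le_iff.mp ?_
          calc ⊤ = Submodule.map P.mkQ ⊤ := by
                rw [Submodule.map_top, Submodule.range_mkQ]
            _ = Submodule.map P.mkQ (Submodule.span A (s : Set M)) := by rw [hspan]
            _ ≤ _ := Submodule.map_mono h1
        rw [Submodule.map_sup, Submodule.mkQ_map_self, sup_bot_eq] at h2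
        exact h2
    have hadd := flen_add (R := A) (M := M) P
    omega

end LocalFlen

section Artinian

open IsLocalRing

universe u
variable {A : Type*} [CommRing A] [IsNoetherianRing A] [IsLocalRing A]

lemma isArtinian_of_torsion_max {M : Type u} [AddCommGroup M] [Module A M] [Module.Finite A M]
    (htor : ∀ r ∈ maximalIdeal A, ∀ x : M, r • x = (0 : M)) : IsArtinian A M := by
  have hM : Module.IsTorsionBySet A M ((maximalIdeal A : Ideal A) : Set A) :=
    fun x a => htor a.1 a.2 x
  letI := hM.module
  let l : M →ₛₗ[Ideal.Quotient.mk (maximalIdeal A)] M :=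
    { toFun := id
      map_add' := fun _ _ => rfl
      map_smul' := fun r x => (hM.mk_smul r x).symm }
  letI : Field (A ⧸ maximalIdeal A) := Ideal.Quotient.field _
  haveI : IsSemisimpleModule (A ⧸ maximalIdeal A) M := inferInstance
  haveI : IsSemisimpleModule A M :=
    (LinearMap.isSemisimpleModule_iff_of_bijective l Function.bijective_id).mpr ‹_›
  exact (IsSemisimpleModule.finite_tfae (R := A) (M := M)).out 0 2 |>.mp ‹_›

lemma isArtinian_of_pow_torsion :
    ∀ (n : ℕ) (M : Type u) [AddCommGroup M] [Module A M] [Module.Finite A M],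
      ((maximalIdeal A) ^ n • (⊤ : Submodule A M) = ⊥) → IsArtinian A M := by
  intro n
  induction n with
  | zero =>
    intro M _ _ _ h
    rw [pow_zero, Ideal.one_eq_top, Submodule.top_smul] at h
    haveI : Subsingleton M := (Submodule.subsingleton_iff A).mp (subsingleton_of_bot_eq_top h.symm)
    infer_instance
  | succ n ih =>
    intro M _ _ _ h
    haveI : IsNoetherian A M := isNoetherian_of_isNoetherianRing_of_finite A M
    set N : Submodule A M := maximalIdeal A • ⊤ with hN
    haveI : Module.Finite A ↥N := Module.Finite.iff_fg.mpr (IsNoetherian.noetherian N)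
    have hNart : IsArtinian A ↥N := by
      refine ih ↥N ?_
      apply Submodule.map_injective_of_injective N.injective_subtype
      rw [Submodule.map_smul'', Submodule.map_top, Submodule.range_subtype, Submodule.map_bot]
      rw [hN, ← mul_smul, ← pow_succ]
      exact h
    have hQart : IsArtinian A (M ⧸ N) := by
      refine isArtinian_of_torsion_max ?_
      intro r hr x
      obtain ⟨y, rfl⟩ := N.mkQ_surjective x
      rw [← LinearMap.map_smul]
      rw [show N.mkQ (r • y) = 0 ↔ r • y ∈ N from Submodule.Quotient.mk_eq_zero N]
      exact Submodule.smul_mem_smul hr trivial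
    exact (isArtinian_iff_submodule_quotient N).mpr ⟨hNart, hQart⟩

end Artinian

section Main

open IsLocalRing

variable {A : Type*} [CommRing A] [IsNoetherianRing A] [IsLocalRing A]

lemma artinian_quot_of_le {P Q : Ideal A} (h : P ≤ Q) [IsArtinian A (A ⧸ P)] :
    IsArtinian A (A ⧸ Q) := by
  refine isArtinian_of_surjective (A ⧸ P)
    (Submodule.mapQ P Q LinearMap.id (by simpa using h)) ?_
  intro z
  obtain ⟨y, rfl⟩ := Q.mkQ_surjective z
  exact ⟨P.mkQ y, rfl⟩

lemma flen_quot_add (P Q : Ideal A) (hPQ : P ≤ Q) [IsArtinian A (A ⧸ P)] :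
    flen A (A ⧸ P) = flen A ↥(Submodule.map P.mkQ Q) + flen A (A ⧸ Q) := by
  rw [flen_add (R := A) (M := A ⧸ P) (Submodule.map P.mkQ Q),
    flen_congr (Submodule.quotientQuotientEquivQuotient P Q hPQ)]

end Main

open IsLocalRing in
theorem stmt1' {A : Type*} [CommRing A] [IsNoetherianRing A] [IsLocalRing A]
    (I : Ideal A) (hIm : I ≤ maximalIdeal A) (hprimary : ∃ k : ℕ, maximalIdeal A ^ k ≤ I)
    (hfull : ∃ x ∈ maximalIdeal A,
      (maximalIdeal A * I).colon (Ideal.span {x}) = I)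
    (J : Ideal A) (hIJ : I ≤ J) :
    (sInf {n | ∃ s : Finset A, s.card = n ∧ Ideal.span (s : Set A) = J}) ≤
      (sInf {n | ∃ s : Finset A, s.card = n ∧ Ideal.span (s : Set A) = I}) := by
  classical
  obtain ⟨k, hk⟩ := hprimary
  obtain ⟨x, hxm, hcolon⟩ := hfull
  set m := maximalIdeal A with hm
  -- Artinian instances
  haveI hart : IsArtinian A (A ⧸ (m * I)) := by
    refine isArtinian_of_pow_torsion (k + 1) _ ?_
    have h1 : (m ^ (k+1) : Ideal A) • (⊤ : Submodule A (A ⧸ (m*I))) =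
        Submodule.map (m*I).mkQ (m ^ (k+1) : Ideal A) := by
      rw [show (⊤ : Submodule A (A ⧸ (m*I))) = Submodule.map (m*I).mkQ ⊤ by
        rw [Submodule.map_top, Submodule.range_mkQ], ← Submodule.map_smul'']
      congr 1
      rw [show (⊤ : Submodule A A) = ((⊤ : Ideal A) : Submodule A A) from rfl,
        Ideal.smul_eq_mul, Ideal.mul_top]
    have h2 : (m ^ (k+1) : Ideal A) ≤ m * I := by
      rw [pow_succ, mul_comm]
      exact Ideal.mul_mono_right hk
    rw [h1]
    refine le_antisymm ?_ bot_le
    calc Submodule.map (m*I).mkQ (m ^ (k+1) : Ideal A)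
        ≤ Submodule.map (m*I).mkQ ((m * I : Ideal A) : Submodule A A) :=
          Submodule.map_mono h2
      _ = ⊥ := Submodule.mkQ_map_self _
  have hmI_I : (m * I : Ideal A) ≤ I := Ideal.mul_le_right
  have hmI_mJ : (m * I : Ideal A) ≤ m * J := Ideal.mul_mono_right hIJ
  have hmJ_J : (m * J : Ideal A) ≤ J := Ideal.mul_le_right
  have hmI_J : (m * I : Ideal A) ≤ J := le_trans hmI_I hIJ
  haveI : IsArtinian A (A ⧸ I) := artinian_quot_of_le hmI_I
  haveI : IsArtinian A (A ⧸ (m * J)) := artinian_quot_of_le hmI_mJ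
  haveI : IsArtinian A (A ⧸ J) := artinian_quot_of_le hmI_J
  set V : Submodule A (A ⧸ (m * I)) := Submodule.map (m*I).mkQ I with hV
  set W : Submodule A (A ⧸ (m * I)) := Submodule.map (m*I).mkQ (m*J) with hW
  set VJ : Submodule A (A ⧸ (m * J)) := Submodule.map (m*J).mkQ J with hVJ
  set X : Submodule A (A ⧸ I) := Submodule.map I.mkQ J with hX
  have h1 : flen A (A ⧸ (m*I)) = flen A ↥V + flen A (A ⧸ I) := flen_quot_add _ _ hmI_I
  have h2 : flen A (A ⧸ (m*I)) = flen A ↥W + flen A (A ⧸ (m*J)) := flen_quot_add _ _ hmI_mJ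
  have h3 : flen A (A ⧸ (m*J)) = flen A ↥VJ + flen A (A ⧸ J) := flen_quot_add _ _ hmJ_J
  have h4 : flen A (A ⧸ I) = flen A ↥X + flen A (A ⧸ J) := flen_quot_add _ _ hIJ
  -- the injection X = J/I ↪ W = mJ/mI given by multiplication by x
  have h5 : flen A ↥X ≤ flen A ↥W := by
    have hle : I ≤ Submodule.comap (LinearMap.lsmul A A x) ((m * I : Ideal A) : Submodule A A) := by
      intro a ha
      show x • a ∈ (m * I : Ideal A)
      rw [smul_eq_mul]
      exact Ideal.mul_mem_mul hxm ha
    set ψ : (A ⧸ I) →ₗ[A] A ⧸ (m * I) :=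
      Submodule.mapQ I ((m * I : Ideal A) : Submodule A A) (LinearMap.lsmul A A x) hle with hψ
    have hinj : Function.Injective ψ := by
      rw [← LinearMap.ker_eq_bot]
      refine le_antisymm ?_ bot_le
      intro u hu
      obtain ⟨a, rfl⟩ := I.mkQ_surjective u
      have : ψ (I.mkQ a) = (m*I : Ideal A).mkQ (x • a) := rfl
      rw [LinearMap.mem_ker, this] at hu
      have hxa : x • a ∈ (m * I : Ideal A) := (Submodule.Quotient.mk_eq_zero _).mp hu
      have haI : a ∈ I := by
        rw [← hcolon, Ideal.mem_colon_span_singleton]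
        rw [smul_eq_mul, mul_comm x a] at hxa
        exact hxa
      show I.mkQ a ∈ (⊥ : Submodule A (A ⧸ I))
      rw [Submodule.mem_bot]
      exact (Submodule.Quotient.mk_eq_zero _).mpr haI
    have hmem : ∀ u : ↥X, ψ (u : A ⧸ I) ∈ W := by
      rintro ⟨u, hu⟩
      obtain ⟨j, hj, rfl⟩ := Submodule.mem_map.mp hu
      have : ψ (I.mkQ j) = (m*I : Ideal A).mkQ (x • j) := rfl
      rw [this]
      refine Submodule.mem_map_of_mem ?_
      show x • j ∈ (m * J : Ideal A)
      rw [smul_eq_mul]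
      exact Ideal.mul_mem_mul hxm hj
    set f : ↥X →ₗ[A] ↥W := LinearMap.codRestrict W (ψ.comp X.subtype) hmem with hf
    have hfinj : Function.Injective f := by
      have hcomp : Function.Injective (ψ.comp X.subtype) := hinj.comp X.injective_subtype
      intro a b hab
      exact hcomp (congrArg Subtype.val hab)
    exact flen_le_of_injective f hfinj
  -- mu J ≤ flen VJ
  have h6 : sInf {n | ∃ s : Finset A, s.card = n ∧ Ideal.span (s : Set A) = J} ≤ flen A ↥VJ := by
    obtain ⟨t, htc, hts⟩ := exists_span_card_flen (R := A) (flen A ↥VJ) ↥VJ rfl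
    have hex : ∀ y : ↥VJ, ∃ a, a ∈ J ∧ (m*J : Ideal A).mkQ a = (y : A ⧸ (m*J)) := by
      rintro ⟨y, hy⟩
      obtain ⟨a, ha, rfl⟩ := Submodule.mem_map.mp hy
      exact ⟨a, ha, rfl⟩
    choose g hg1 hg2 using hex
    set T : Finset A := t.image g with hT
    have hTJ : Ideal.span (T : Set A) ≤ J := by
      rw [Ideal.span_le]
      intro a ha
      rw [hT, Finset.coe_image] at ha
      obtain ⟨y, _, rfl⟩ := ha
      exact hg1 y
    have hVJle : VJ ≤ Submodule.map (m*J : Ideal A).mkQ (Ideal.span (T : Set A)) := by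
      have hspan : Submodule.map VJ.subtype (Submodule.span A (t : Set ↥VJ)) = VJ := by
        rw [hts, Submodule.map_top, Submodule.range_subtype]
      rw [← hspan, Submodule.map_span]
      refine Submodule.span_le.mpr ?_
      rintro z ⟨y, hy, rfl⟩
      have : (VJ.subtype y : A ⧸ (m*J)) = (m*J : Ideal A).mkQ (g y) := (hg2 y).symm
      rw [this, ← Ideal.submodule_span_eq]
      refine Submodule.mem_map_of_mem (Submodule.subset_span ?_)
      rw [hT, Finset.coe_image]
      exact ⟨y, hy, rfl⟩
    have hJle : J ≤ Ideal.span (T : Set A) ⊔ m * J := by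
      have h1' : Submodule.map (m*J : Ideal A).mkQ J ≤
          Submodule.map (m*J : Ideal A).mkQ (Ideal.span (T : Set A)) := hVJle
      have h2' := Submodule.comap_mono (f := (m*J : Ideal A).mkQ) h1'
      refine le_trans (le_trans (Submodule.le_comap_map _ _) h2') ?_
      rw [Submodule.comap_map_mkQ]
      exact le_of_eq (sup_comm _ _)
    have hjac : m ≤ Ideal.jacobson ⊥ := by
      rw [IsLocalRing.jacobson_eq_maximalIdeal ⊥ bot_ne_top]
    have hJfg : (J : Submodule A A).FG := IsNoetherian.noetherian J
    have hNak : J ≤ Ideal.span (T : Set A) := by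
      refine Submodule.le_of_le_smul_of_le_jacobson_bot hJfg hjac ?_
      rw [Ideal.smul_eq_mul]
      exact hJle
    have hspanT : Ideal.span (T : Set A) = J := le_antisymm hTJ hNak
    calc sInf {n | ∃ s : Finset A, s.card = n ∧ Ideal.span (s : Set A) = J}
        ≤ T.card := Nat.sInf_le ⟨T, rfl, hspanT⟩
      _ ≤ t.card := Finset.card_image_le
      _ ≤ flen A ↥VJ := htc
  -- flen V ≤ mu I
  have h7 : flen A ↥V ≤ sInf {n | ∃ s : Finset A, s.card = n ∧ Ideal.span (s : Set A) = I} := by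
    have hne : {n | ∃ s : Finset A, s.card = n ∧ Ideal.span (s : Set A) = I}.Nonempty := by
      obtain ⟨S, hS⟩ := IsNoetherian.noetherian (I : Submodule A A)
      exact ⟨S.card, S, rfl, by rw [← Ideal.submodule_span_eq]; exact hS⟩
    obtain ⟨S₀, hS₀c, hS₀s⟩ := Nat.sInf_mem hne
    have hS₀I : ∀ a ∈ S₀, a ∈ I := fun a ha => hS₀s ▸ Ideal.subset_span ha
    have htor : ∀ r ∈ m, ∀ v : ↥V, r • v = (0 : ↥V) := by
      intro r hr v
      obtain ⟨b, hb⟩ := v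
      obtain ⟨a, ha, rfl⟩ := Submodule.mem_map.mp hb
      ext
      show r • (m*I : Ideal A).mkQ a = 0
      rw [← LinearMap.map_smul]
      refine (Submodule.Quotient.mk_eq_zero _).mpr ?_
      show r • a ∈ (m * I : Ideal A)
      rw [smul_eq_mul]
      exact Ideal.mul_mem_mul hr ha
    set t : Finset ↥V := S₀.attach.image
      (fun a => (⟨(m*I : Ideal A).mkQ a.1, Submodule.mem_map_of_mem (hS₀I a.1 a.2)⟩ : ↥V)) with ht
    have hcard : t.card ≤ sInf {n | ∃ s : Finset A, s.card = n ∧ Ideal.span (s : Set A) = I} := by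
      calc t.card ≤ S₀.attach.card := Finset.card_image_le
        _ = S₀.card := Finset.card_attach
        _ = _ := hS₀c
    have hspan : Submodule.span A (t : Set ↥V) = ⊤ := by
      apply Submodule.map_injective_of_injective V.injective_subtype
      rw [Submodule.map_span, Submodule.map_top, Submodule.range_subtype]
      have himg : (⇑V.subtype '' (t : Set ↥V)) = ⇑(m*I : Ideal A).mkQ '' (S₀ : Set A) := by
        ext z
        constructor
        · rintro ⟨y, hy, rfl⟩
          obtain ⟨a, -, rfl⟩ := Finset.mem_image.mp (Finset.mem_coe.mp hy)
          exact ⟨a.1, a.2, rfl⟩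
        · rintro ⟨a, ha, rfl⟩
          refine ⟨⟨(m*I : Ideal A).mkQ a, Submodule.mem_map_of_mem (hS₀I a ha)⟩, ?_, rfl⟩
          exact Finset.mem_coe.mpr (Finset.mem_image.mpr ⟨⟨a, ha⟩, Finset.mem_attach _ _, rfl⟩)
      rw [himg, ← Submodule.map_span, Ideal.submodule_span_eq, hS₀s]
    exact flen_le_card_of_span _ ↥V htor t hcard hspan
  omega



open IsLocalRing

/-- `mu I` is the minimal number of generators of the ideal `I`. -/
noncomputable def mu {A : Type*} [CommRing A] (I : Ideal A) : ℕ :=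
  sInf {n | ∃ s : Finset A, s.card = n ∧ Ideal.span (s : Set A) = I}

/-- An `m`-primary `m`-full ideal has the Rees property. -/
theorem stmt1 {A : Type*} [CommRing A] [IsNoetherianRing A] [IsLocalRing A]
    (I : Ideal A) (hIm : I ≤ maximalIdeal A) (hprimary : ∃ k : ℕ, maximalIdeal A ^ k ≤ I)
    (hfull : ∃ x ∈ maximalIdeal A,
      (maximalIdeal A * I).colon (Ideal.span {x}) = I)
    (J : Ideal A) (hIJ : I ≤ J) :
    mu J ≤ mu I := by
  unfold mu
  exact stmt1' I hIm hprimary hfull J hIJ
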